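/- Consider the leader-follower networked system on a probability space (Ω, ℱ, μ): x₀(k+1) = A₀₀x₀(k) + B₀₀u₀(k) + w₀(k) and x₁(k+1) = A₁₁x₁(k) + B₁₁u₁(k) + A₁₀x₀(k) + B₁₀u₀(k) + w₁(k) for k = 0, …, N−1, where x₀(0), x₁(0) : Ω → ℝⁿ and the noises w₀(0), …, w₀(N−1), w₁(0), …, w₁(N−1) : Ω → ℝⁿ are mutually independent and square-integrable with E[w₀(k)] = 0, and the controls are u₀(k) = g₀ₖ(x₀(0), …, x₀(k)), u₁(k) = g₁ₖ(x₀(0), …, x₀(k), x₁(0), …, x₁(k)) for measurable functions g₀ₖ, g₁ₖ, with all states and controls square-integrable. Let F₀(k) be the σ-algebra generated by (x₀(0), …, x₀(k)). Then for every k with 1 ≤ k ≤ N and all coordinate indices i, j ∈ {1, …, n}, almost surely E[x₀(k)ᵢ · x₁(k)ⱼ | F₀(k−1)] = E[x₀(k)ᵢ | F₀(k−1)] · E[x₁(k)ⱼ | F₀(k−1)]; that is, x₀(k) and x₁(k) are conditionally uncorrelated given F₀(k−1). -/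

import Mathlib

open MeasureTheory ProbabilityTheory

lemma lfcu_measurable_mulVec {p q : ℕ} (M : Matrix (Fin p) (Fin q) ℝ) :
    Measurable (fun v : Fin q → ℝ => M.mulVec v) := by
  have h := (LinearMap.toContinuousLinearMap M.mulVecLin).continuous.measurable
  exact h

lemma lfcu_memℒp_mulVec {Ω : Type*} {mΩ : MeasurableSpace Ω} {μ : Measure Ω}
    {p q : ℕ} (M : Matrix (Fin p) (Fin q) ℝ) {f : Ω → Fin q → ℝ}
    (hf : MemLp f 2 μ) : MemLp (fun ω => M.mulVec (f ω)) 2 μ := by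
  have h := (LinearMap.toContinuousLinearMap M.mulVecLin).comp_memLp' hf
  exact h

lemma lfcu_memℒp_coord {Ω : Type*} {mΩ : MeasurableSpace Ω} {μ : Measure Ω}
    {q : ℕ} {f : Ω → Fin q → ℝ} (hf : MemLp f 2 μ) (i : Fin q) :
    MemLp (fun ω => f ω i) 2 μ := by
  have h := (ContinuousLinearMap.proj (R := ℝ) (φ := fun _ : Fin q => ℝ) i).comp_memLp' hf
  exact h

lemma lfcu_integrable_mul {Ω : Type*} {mΩ : MeasurableSpace Ω} {μ : Measure Ω}
    {f g : Ω → ℝ} (hf : MemLp f 2 μ) (hg : MemLp g 2 μ) :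
    Integrable (fun ω => f ω * g ω) μ := by
  have h := hg.smul hf (p := 2) (q := 2) (r := 1)
  rw [memLp_one_iff_integrable] at h
  exact h

lemma lfcu_integral_coord {Ω : Type*} {mΩ : MeasurableSpace Ω} {μ : Measure Ω}
    {q : ℕ} {f : Ω → Fin q → ℝ} (hf : Integrable f μ) (i : Fin q) :
    ∫ ω, f ω i ∂μ = (∫ ω, f ω ∂μ) i := by
  have h := (ContinuousLinearMap.proj (R := ℝ) (φ := fun _ : Fin q => ℝ) i).integral_comp_comm hf
  simpa using h


/-- Conditional uncorrelatedness of the leader and follower states (paper's Lemma 2):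
for `1 ≤ k ≤ N` and all coordinates `i, j`,
`E[x₀(k)ᵢ x₁(k)ⱼ | F₀(k−1)] = E[x₀(k)ᵢ | F₀(k−1)] · E[x₁(k)ⱼ | F₀(k−1)]` almost surely. -/
theorem leader_follower_conditionally_uncorrelated
    {Ω : Type*} [MeasurableSpace Ω] (μ : Measure Ω) [IsProbabilityMeasure μ]
    (n m₁ m₂ N : ℕ)
    (A₀₀ A₁₀ A₁₁ : Matrix (Fin n) (Fin n) ℝ)
    (B₀₀ B₁₀ : Matrix (Fin n) (Fin m₁) ℝ) (B₁₁ : Matrix (Fin n) (Fin m₂) ℝ)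
    (x₀ x₁ w₀ w₁ : ℕ → Ω → (Fin n → ℝ))
    (u₀ : ℕ → Ω → (Fin m₁ → ℝ)) (u₁ : ℕ → Ω → (Fin m₂ → ℝ))
    -- dynamics of the leader and the follower
    (hdyn₀ : ∀ k < N, ∀ ω, x₀ (k + 1) ω =
      A₀₀.mulVec (x₀ k ω) + B₀₀.mulVec (u₀ k ω) + w₀ k ω)
    (hdyn₁ : ∀ k < N, ∀ ω, x₁ (k + 1) ω =
      A₁₁.mulVec (x₁ k ω) + B₁₁.mulVec (u₁ k ω)
        + A₁₀.mulVec (x₀ k ω) + B₁₀.mulVec (u₀ k ω) + w₁ k ω)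
    -- measurability of the primitive random vectors
    (hmx₀ : Measurable (x₀ 0)) (hmx₁ : Measurable (x₁ 0))
    (hmw₀ : ∀ k < N, Measurable (w₀ k)) (hmw₁ : ∀ k < N, Measurable (w₁ k))
    -- mutual independence of the initial states and all noises
    (hindep : iIndepFun
      (Sum.elim (![x₀ 0, x₁ 0])
        (Sum.elim (fun i : Fin N => w₀ i) (fun i : Fin N => w₁ i))) μ)
    -- square-integrability of noises, states and controls, zero-mean leader noise
    (hw₀int : ∀ k < N, MemLp (w₀ k) 2 μ) (hw₁int : ∀ k < N, MemLp (w₁ k) 2 μ)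
    (hw₀mean : ∀ k < N, ∫ ω, w₀ k ω ∂μ = 0)
    (hx₀int : ∀ k ≤ N, MemLp (x₀ k) 2 μ) (hx₁int : ∀ k ≤ N, MemLp (x₁ k) 2 μ)
    (hu₀int : ∀ k < N, MemLp (u₀ k) 2 μ) (hu₁int : ∀ k < N, MemLp (u₁ k) 2 μ)
    -- controls are measurable functions of the appropriate information sets
    (g₀ : ∀ k : ℕ, (Fin (k+1) → (Fin n → ℝ)) → (Fin m₁ → ℝ))
    (g₁ : ∀ k : ℕ, ((Fin (k+1) → (Fin n → ℝ)) × (Fin (k+1) → (Fin n → ℝ))) → (Fin m₂ → ℝ))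
    (hg₀meas : ∀ k, Measurable (g₀ k)) (hg₁meas : ∀ k, Measurable (g₁ k))
    (hu₀pol : ∀ k < N, ∀ ω, u₀ k ω = g₀ k (fun i : Fin (k+1) => x₀ i ω))
    (hu₁pol : ∀ k < N, ∀ ω, u₁ k ω =
      g₁ k ((fun i : Fin (k+1) => x₀ i ω), (fun i : Fin (k+1) => x₁ i ω)))
    -- the leader's information σ-algebras
    (F₀ : ℕ → MeasurableSpace Ω)
    (hF₀ : ∀ k, F₀ k =
      MeasurableSpace.comap (fun ω => (fun i : Fin (k+1) => x₀ i ω)) inferInstance) :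
    ∀ k < N, ∀ i j : Fin n,
      μ[fun ω => x₀ (k+1) ω i * x₁ (k+1) ω j|F₀ k] =ᵐ[μ] fun ω =>
        (μ[fun ω' => x₀ (k+1) ω' i|F₀ k]) ω * (μ[fun ω' => x₁ (k+1) ω' j|F₀ k]) ω := by
  rename_i mΩ hPμ
  intro k hk i j
  -- the family of primitive random vectors
  set f : (Fin 2 ⊕ (Fin N ⊕ Fin N)) → Ω → (Fin n → ℝ) :=
    Sum.elim (![x₀ 0, x₁ 0]) (Sum.elim (fun i : Fin N => w₀ i) (fun i : Fin N => w₁ i))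
    with hfdef
  set K : Fin 2 ⊕ (Fin N ⊕ Fin N) := Sum.inr (Sum.inl ⟨k, hk⟩) with hKdef
  set mm : (Fin 2 ⊕ (Fin N ⊕ Fin N)) → MeasurableSpace Ω :=
    fun s => MeasurableSpace.comap (f s) inferInstance with hmmdef
  have hmf : ∀ s, Measurable (f s) := by
    rintro (s | s | s)
    · fin_cases s
      · simpa [f] using hmx₀
      · simpa [f] using hmx₁
    · simpa [f] using hmw₀ s s.isLt
    · simpa [f] using hmw₁ s s.isLt
  have h_le : ∀ s, mm s ≤ mΩ := fun s => (hmf s).comap_le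
  set H : MeasurableSpace Ω := ⨆ s ∈ ({K}ᶜ : Set (Fin 2 ⊕ (Fin N ⊕ Fin N))), mm s with hHdef
  have hH_le : H ≤ mΩ := by
    rw [hHdef]; exact iSup₂_le fun s _ => h_le s
  have hmemH : ∀ s, s ≠ K → Measurable[H] (f s) := by
    intro s hs
    refine measurable_iff_comap_le.mpr ?_
    rw [hHdef]
    exact le_iSup₂ (f := fun s (_ : s ∈ ({K}ᶜ : Set _)) => mm s) s hs
  -- measurability of all states up to time k w.r.t. H
  have hHx : ∀ l, l ≤ k → Measurable[H] (x₀ l) ∧ Measurable[H] (x₁ l) := by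
    intro l
    induction l using Nat.strong_induction_on with
    | _ l ih =>
      intro hl
      match l, hl, ih with
      | 0, _, _ =>
        constructor
        · have h := hmemH (Sum.inl 0) (by simp [hKdef])
          simpa [f] using h
        · have h := hmemH (Sum.inl 1) (by simp [hKdef])
          simpa [f] using h
      | r + 1, hl, ih =>
        have hrk : r < k := hl
        have hrN : r < N := lt_trans hrk hk
        have htup0 : Measurable[H] (fun ω => fun i : Fin (r+1) => x₀ i ω) :=
          measurable_pi_lambda _ fun i =>
            (ih i i.isLt (le_trans (Nat.lt_succ_iff.mp i.isLt) hrk.le)).1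
        have htup1 : Measurable[H] (fun ω => fun i : Fin (r+1) => x₁ i ω) :=
          measurable_pi_lambda _ fun i =>
            (ih i i.isLt (le_trans (Nat.lt_succ_iff.mp i.isLt) hrk.le)).2
        have hx0r : Measurable[H] (x₀ r) := (ih r (Nat.lt_succ_self r) hrk.le).1
        have hx1r : Measurable[H] (x₁ r) := (ih r (Nat.lt_succ_self r) hrk.le).2
        have hu0r : Measurable[H] (u₀ r) := by
          have he : u₀ r = fun ω => g₀ r (fun i : Fin (r+1) => x₀ i ω) :=
            funext (hu₀pol r hrN)
          rw [he]; exact (hg₀meas r).comp htup0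
        have hu1r : Measurable[H] (u₁ r) := by
          have he : u₁ r = fun ω =>
              g₁ r ((fun i : Fin (r+1) => x₀ i ω), (fun i : Fin (r+1) => x₁ i ω)) :=
            funext (hu₁pol r hrN)
          rw [he]; exact (hg₁meas r).comp (htup0.prodMk htup1)
        have hw0r : Measurable[H] (w₀ r) := by
          have h := hmemH (Sum.inr (Sum.inl ⟨r, hrN⟩)) (by
            simp only [hKdef, ne_eq, Sum.inr.injEq, Sum.inl.injEq, Fin.mk.injEq]
            omega)
          simpa [f] using h
        have hw1r : Measurable[H] (w₁ r) := by
          have h := hmemH (Sum.inr (Sum.inr ⟨r, hrN⟩)) (by simp [hKdef])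
          simpa [f] using h
        constructor
        · have he : x₀ (r+1) = fun ω =>
              A₀₀.mulVec (x₀ r ω) + B₀₀.mulVec (u₀ r ω) + w₀ r ω := funext (hdyn₀ r hrN)
          rw [he]
          exact (((lfcu_measurable_mulVec A₀₀).comp hx0r).add
            ((lfcu_measurable_mulVec B₀₀).comp hu0r)).add hw0r
        · have he : x₁ (r+1) = fun ω =>
              A₁₁.mulVec (x₁ r ω) + B₁₁.mulVec (u₁ r ω) + A₁₀.mulVec (x₀ r ω)
                + B₁₀.mulVec (u₀ r ω) + w₁ r ω := funext (hdyn₁ r hrN)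
          rw [he]
          exact (((((lfcu_measurable_mulVec A₁₁).comp hx1r).add
            ((lfcu_measurable_mulVec B₁₁).comp hu1r)).add
            ((lfcu_measurable_mulVec A₁₀).comp hx0r)).add
            ((lfcu_measurable_mulVec B₁₀).comp hu0r)).add hw1r
  have htup0k : Measurable[H] (fun ω => fun i : Fin (k+1) => x₀ i ω) :=
    measurable_pi_lambda _ fun i => (hHx i (Nat.lt_succ_iff.mp i.isLt)).1
  have htup1k : Measurable[H] (fun ω => fun i : Fin (k+1) => x₁ i ω) :=
    measurable_pi_lambda _ fun i => (hHx i (Nat.lt_succ_iff.mp i.isLt)).2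
  have hFH : F₀ k ≤ H := by
    rw [hF₀ k]; exact measurable_iff_comap_le.mp htup0k
  have hF_le : F₀ k ≤ mΩ := hFH.trans hH_le
  -- F₀ k - measurability of x₀ l (l ≤ k) and u₀ k
  have hFx0 : ∀ l, l ≤ k → Measurable[F₀ k] (x₀ l) := by
    intro l hl
    have h : Measurable[F₀ k] (fun ω => fun i : Fin (k+1) => x₀ i ω) := by
      rw [hF₀ k]; exact measurable_iff_comap_le.mpr le_rfl
    exact (measurable_pi_apply (⟨l, Nat.lt_succ_of_le hl⟩ : Fin (k+1))).comp h
  have hFu0 : Measurable[F₀ k] (u₀ k) := by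
    have he : u₀ k = fun ω => g₀ k (fun i : Fin (k+1) => x₀ i ω) := funext (hu₀pol k hk)
    rw [he, hF₀ k]
    exact (hg₀meas k).comp (measurable_iff_comap_le.mpr le_rfl)
  -- decomposition of the leader state
  set a : Ω → Fin n → ℝ := fun ω => A₀₀.mulVec (x₀ k ω) + B₀₀.mulVec (u₀ k ω) with hadef
  have haF : Measurable[F₀ k] a :=
    ((lfcu_measurable_mulVec A₀₀).comp (hFx0 k le_rfl)).add
      ((lfcu_measurable_mulVec B₀₀).comp hFu0)
  have haL2 : MemLp a 2 μ :=
    (lfcu_memℒp_mulVec A₀₀ (hx₀int k hk.le)).add (lfcu_memℒp_mulVec B₀₀ (hu₀int k hk))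
  -- the scalar random variables
  set ai : Ω → ℝ := fun ω => a ω i with haidef
  set Wi : Ω → ℝ := fun ω => w₀ k ω i with hWidef
  set bj : Ω → ℝ := fun ω => x₁ (k+1) ω j with hbjdef
  have hx0coord : ∀ ω, x₀ (k+1) ω i = ai ω + Wi ω := by
    intro ω; rw [hdyn₀ k hk ω]; simp [ai, Wi, a]
  have haiF : StronglyMeasurable[F₀ k] ai :=
    ((measurable_pi_apply i).comp haF).stronglyMeasurable
  have haiL2 : MemLp ai 2 μ := lfcu_memℒp_coord haL2 i
  have hWiL2 : MemLp Wi 2 μ := lfcu_memℒp_coord (hw₀int k hk) i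
  have hbjL2 : MemLp bj 2 μ := lfcu_memℒp_coord (hx₁int (k+1) hk) j
  -- H-measurability of x₁ (k+1)
  have hu1kH : Measurable[H] (u₁ k) := by
    have he : u₁ k = fun ω =>
        g₁ k ((fun i : Fin (k+1) => x₀ i ω), (fun i : Fin (k+1) => x₁ i ω)) :=
      funext (hu₁pol k hk)
    rw [he]; exact (hg₁meas k).comp (htup0k.prodMk htup1k)
  have hw1kH : Measurable[H] (w₁ k) := by
    have h := hmemH (Sum.inr (Sum.inr ⟨k, hk⟩)) (by simp [hKdef])
    simpa [f] using h
  have hbH : Measurable[H] (x₁ (k+1)) := by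
    have he : x₁ (k+1) = fun ω =>
        A₁₁.mulVec (x₁ k ω) + B₁₁.mulVec (u₁ k ω) + A₁₀.mulVec (x₀ k ω)
          + B₁₀.mulVec (u₀ k ω) + w₁ k ω := funext (hdyn₁ k hk)
    have hu0kH : Measurable[H] (u₀ k) := by
      have he' : u₀ k = fun ω => g₀ k (fun i : Fin (k+1) => x₀ i ω) := funext (hu₀pol k hk)
      rw [he']; exact (hg₀meas k).comp htup0k
    rw [he]
    exact (((((lfcu_measurable_mulVec A₁₁).comp (hHx k le_rfl).2).add
      ((lfcu_measurable_mulVec B₁₁).comp hu1kH)).add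
      ((lfcu_measurable_mulVec A₁₀).comp (hHx k le_rfl).1)).add
      ((lfcu_measurable_mulVec B₁₀).comp hu0kH)).add hw1kH
  have hbjH : StronglyMeasurable[H] bj :=
    ((measurable_pi_apply j).comp hbH).stronglyMeasurable
  -- Wi is measurable w.r.t. mm K
  have hWmK : StronglyMeasurable[mm K] Wi := by
    have h : Measurable[mm K] (f K) := measurable_iff_comap_le.mpr le_rfl
    have h2 : Measurable[mm K] Wi := by
      have : Wi = fun ω => f K ω i := by
        funext ω; simp [Wi, f, hKdef]
      rw [this]; exact (measurable_pi_apply i).comp h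
    exact h2.stronglyMeasurable
  -- independence of Wi's σ-algebra from H (and hence from F₀ k)
  have hIndKH : Indep (mm K) H μ := by
    have hii : iIndep mm μ := (iIndepFun_iff_iIndep _ _ _).mp hindep
    have h := ProbabilityTheory.indep_biSup_compl h_le hii {K}
    have hsingle : (⨆ s ∈ ({K} : Set (Fin 2 ⊕ (Fin N ⊕ Fin N))), mm s) = mm K := by
      simp
    rw [hHdef]
    rwa [hsingle] at h
  have hIndKF : Indep (mm K) (F₀ k) μ := indep_of_indep_of_le_right hIndKH hFH
  -- mean of Wi is zero
  have hWint : Integrable Wi μ := (lfcu_memℒp_coord (hw₀int k hk) i).integrable one_le_two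
  have hWmean : ∫ ω, Wi ω ∂μ = 0 := by
    have h := lfcu_integral_coord ((hw₀int k hk).integrable one_le_two) i
    rw [hw₀mean k hk] at h
    simpa [Wi] using h
  -- E[Wi | F₀ k] = 0 and E[Wi | H] = 0
  have hcondWF : μ[Wi|F₀ k] =ᵐ[μ] fun _ => (0 : ℝ) := by
    have h := condExp_indep_eq (h_le K) hF_le hWmK hIndKF
    refine h.trans ?_
    rw [hWmean]
  have hcondWH : μ[Wi|H] =ᵐ[μ] fun _ => (0 : ℝ) := by
    have h := condExp_indep_eq (h_le K) hH_le hWmK hIndKH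
    refine h.trans ?_
    rw [hWmean]
  -- integrabilities
  have hbjint : Integrable bj μ := hbjL2.integrable one_le_two
  have haiint : Integrable ai μ := haiL2.integrable one_le_two
  have haibj : Integrable (fun ω => ai ω * bj ω) μ := lfcu_integrable_mul haiL2 hbjL2
  have hWibj : Integrable (fun ω => Wi ω * bj ω) μ := lfcu_integrable_mul hWiL2 hbjL2
  -- E[Wi * bj | H] = 0 by pull-out
  have hpullH : μ[fun ω => Wi ω * bj ω|H] =ᵐ[μ] fun _ => (0 : ℝ) := by
    have hmul : (fun ω => Wi ω * bj ω) = bj * Wi := by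
      funext ω; simp [mul_comm]
    have h := condExp_mul_of_stronglyMeasurable_left hbjH
      (by rw [← hmul]; exact hWibj) hWint
    rw [hmul]
    refine h.trans ?_
    filter_upwards [hcondWH] with ω hω
    simp [hω]
  -- tower: E[Wi * bj | F₀ k] = 0
  have hWbjF : μ[fun ω => Wi ω * bj ω|F₀ k] =ᵐ[μ] fun _ => (0 : ℝ) := by
    have htower := condExp_condExp_of_le hFH hH_le
      (f := fun ω => Wi ω * bj ω) (μ := μ)
    have h0 : μ[μ[fun ω => Wi ω * bj ω|H]|F₀ k] =ᵐ[μ] μ[fun _ => (0 : ℝ)|F₀ k] :=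
      condExp_congr_ae hpullH
    refine htower.symm.trans (h0.trans ?_)
    rw [show (fun _ : Ω => (0 : ℝ)) = (0 : Ω → ℝ) from rfl, condExp_zero]
  -- pull-out for ai * bj
  have haibjF : μ[fun ω => ai ω * bj ω|F₀ k] =ᵐ[μ] fun ω => ai ω * (μ[bj|F₀ k]) ω := by
    have h := condExp_mul_of_stronglyMeasurable_left haiF (by exact haibj) hbjint
    exact h
  -- conditional expectation of x₀(k+1)_i
  have hcondx0 : μ[fun ω' => x₀ (k+1) ω' i|F₀ k] =ᵐ[μ] ai := by
    have he : (fun ω' => x₀ (k+1) ω' i) = fun ω => ai ω + Wi ω := funext hx0coord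
    rw [he]
    have hadd := condExp_add haiint hWint (m := F₀ k)
    refine hadd.trans ?_
    have hconda : μ[ai|F₀ k] = ai := condExp_of_stronglyMeasurable hF_le haiF haiint
    rw [hconda]
    filter_upwards [hcondWF] with ω h2
    simp [h2]
  -- conditional expectation of the product
  have hcondprod : μ[fun ω => x₀ (k+1) ω i * x₁ (k+1) ω j|F₀ k] =ᵐ[μ]
      fun ω => ai ω * (μ[bj|F₀ k]) ω := by
    have he : (fun ω => x₀ (k+1) ω i * x₁ (k+1) ω j)
        = fun ω => ai ω * bj ω + Wi ω * bj ω := by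
      funext ω; rw [hx0coord ω]; ring
    rw [he]
    have hadd := condExp_add haibj hWibj (m := F₀ k)
    refine hadd.trans ?_
    filter_upwards [haibjF, hWbjF] with ω h1 h2
    simp only [Pi.add_apply, h1, h2, add_zero]
  -- conclude
  filter_upwards [hcondprod, hcondx0] with ω h1 h2
  rw [h1, h2]
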